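/- For a real a > 0 and a nonzero real b, the integral of 1/sqrt((a²−T²)(b²+T²)) for T from −a to a equals (2/|b|)·K(m) where m = −a²/b² (a negative parameter). -/

import Mathlib

open Real intervalIntegral

theorem stmt_2 (a b : ℝ) (ha : 0 < a) (hb : b ≠ 0) :
    ∫ T in (-a)..a, 1 / Real.sqrt ((a ^ 2 - T ^ 2) * (b ^ 2 + T ^ 2)) =
      (2 / |b|) * ∫ θ in (0:ℝ)..(π / 2),
        1 / Real.sqrt (1 - (-(a ^ 2 / b ^ 2)) * Real.sin θ ^ 2) := by
  have hb2 : 0 < b ^ 2 := by positivity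
  set g : ℝ → ℝ := fun T => 1 / Real.sqrt ((a ^ 2 - T ^ 2) * (b ^ 2 + T ^ 2)) with hg
  set h : ℝ → ℝ := fun θ => 1 / Real.sqrt (b ^ 2 + a ^ 2 * Real.sin θ ^ 2) with hh
  have hpos : ∀ θ : ℝ, 0 < b ^ 2 + a ^ 2 * Real.sin θ ^ 2 := fun θ => by positivity
  have hcont : Continuous h := by
    apply Continuous.div continuous_const
    · exact (continuous_const.add (continuous_const.mul (Real.continuous_sin.pow 2))).sqrt
    · intro θ
      exact (Real.sqrt_pos.2 (hpos θ)).ne'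
  have hsub : Set.Ioo (-(π/2)) (π/2) ⊆ Set.Icc (-(π/2)) (π/2) := Set.Ioo_subset_Icc_self
  have hmeas : MeasurableSet (Set.Ioo (-(π/2)) (π/2)) := measurableSet_Ioo
  have himg : (fun θ => a * Real.sin θ) '' Set.Ioo (-(π/2)) (π/2) = Set.Ioo (-a) a := by
    ext x
    simp only [Set.mem_image, Set.mem_Ioo]
    constructor
    · rintro ⟨θ, ⟨h1, h2⟩, rfl⟩
      have hs1 : Real.sin (-(π/2)) < Real.sin θ :=
        Real.strictMonoOn_sin ⟨le_refl _, by linarith [Real.pi_pos]⟩ (hsub ⟨h1, h2⟩) h1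
      have hs2 : Real.sin θ < Real.sin (π/2) :=
        Real.strictMonoOn_sin (hsub ⟨h1, h2⟩) ⟨by linarith [Real.pi_pos], le_refl _⟩ h2
      simp only [Real.sin_neg, Real.sin_pi_div_two] at hs1 hs2
      constructor <;> nlinarith
    · rintro ⟨h1, h2⟩
      refine ⟨Real.arcsin (x / a), ⟨?_, ?_⟩, ?_⟩
      · exact Real.neg_pi_div_two_lt_arcsin.2 (by rw [lt_div_iff₀ ha]; linarith)
      · exact Real.arcsin_lt_pi_div_two.2 (by rw [div_lt_iff₀ ha]; linarith)
      · rw [Real.sin_arcsin (by rw [le_div_iff₀ ha]; linarith)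
          (by rw [div_le_iff₀ ha]; linarith)]
        field_simp
  have hder : ∀ θ ∈ Set.Ioo (-(π/2)) (π/2),
      HasDerivWithinAt (fun θ => a * Real.sin θ) (a * Real.cos θ) (Set.Ioo (-(π/2)) (π/2)) θ :=
    fun θ _ => ((Real.hasDerivAt_sin θ).const_mul a).hasDerivWithinAt
  have hinj : Set.InjOn (fun θ => a * Real.sin θ) (Set.Ioo (-(π/2)) (π/2)) := by
    intro x hx y hy hxy
    exact Real.injOn_sin ⟨(hsub hx).1, (hsub hx).2⟩ ⟨(hsub hy).1, (hsub hy).2⟩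
      (mul_left_cancel₀ ha.ne' hxy)
  have key : ∫ T in Set.Ioo (-a) a, g T = ∫ θ in Set.Ioo (-(π/2)) (π/2), h θ := by
    rw [← himg, MeasureTheory.integral_image_eq_integral_abs_deriv_smul hmeas hder hinj g]
    apply MeasureTheory.setIntegral_congr_fun hmeas
    intro θ hθ
    have hc : 0 < Real.cos θ := Real.cos_pos_of_mem_Ioo hθ
    have hac : 0 < a * Real.cos θ := by positivity
    have h1 : a ^ 2 - (a * Real.sin θ) ^ 2 = (a * Real.cos θ) ^ 2 := by
      have := Real.sin_sq_add_cos_sq θ; ring_nf; nlinarith [Real.sin_sq_add_cos_sq θ]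
    simp only [smul_eq_mul, hg, hh]
    rw [h1, abs_of_pos hac, Real.sqrt_mul (by positivity), Real.sqrt_sq hac.le, mul_pow]
    have hsq : 0 < Real.sqrt (b ^ 2 + a ^ 2 * Real.sin θ ^ 2) := Real.sqrt_pos.2 (hpos θ)
    field_simp
  have hle : -(π/2) ≤ π/2 := by linarith [Real.pi_pos]
  have step1 : ∫ T in (-a)..a, g T = ∫ θ in (-(π/2))..(π/2), h θ := by
    rw [intervalIntegral.integral_of_le (by linarith), intervalIntegral.integral_of_le hle,
      MeasureTheory.integral_Ioc_eq_integral_Ioo, MeasureTheory.integral_Ioc_eq_integral_Ioo, key]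
  have heven : ∀ θ : ℝ, h (-θ) = h θ := by
    intro θ; simp [hh]
  have step2 : ∫ θ in (-(π/2))..(π/2), h θ = 2 * ∫ θ in (0:ℝ)..(π/2), h θ := by
    have hi1 : IntervalIntegrable h MeasureTheory.volume (-(π/2)) 0 :=
      hcont.intervalIntegrable _ _
    have hi2 : IntervalIntegrable h MeasureTheory.volume 0 (π/2) :=
      hcont.intervalIntegrable _ _
    rw [← intervalIntegral.integral_add_adjacent_intervals hi1 hi2]
    have : ∫ θ in (-(π/2))..(0:ℝ), h θ = ∫ θ in (0:ℝ)..(π/2), h θ := by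
      have hcn := intervalIntegral.integral_comp_neg (a := (0:ℝ)) (b := π/2) h
      simp only [heven, neg_zero] at hcn
      exact hcn.symm
    rw [this]; ring
  have step3 : ∀ θ : ℝ, 1 / Real.sqrt (1 - (-(a ^ 2 / b ^ 2)) * Real.sin θ ^ 2)
      = |b| * h θ := by
    intro θ
    have habs : (0:ℝ) < |b| := abs_pos.2 hb
    have h2 : b ^ 2 + a ^ 2 * Real.sin θ ^ 2
        = b ^ 2 * (1 - (-(a ^ 2 / b ^ 2)) * Real.sin θ ^ 2) := by
      field_simp
      ring
    simp only [hh]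
    rw [h2, Real.sqrt_mul (by positivity), Real.sqrt_sq_eq_abs]
    have hpos' : 0 < 1 - (-(a ^ 2 / b ^ 2)) * Real.sin θ ^ 2 := by
      have h3 : 0 < b ^ 2 * (1 - (-(a ^ 2 / b ^ 2)) * Real.sin θ ^ 2) := by
        rw [← h2]; exact hpos θ
      nlinarith [h3, hb2]
    have hs : 0 < Real.sqrt (1 - (-(a ^ 2 / b ^ 2)) * Real.sin θ ^ 2) := Real.sqrt_pos.2 hpos'
    field_simp
  calc ∫ T in (-a)..a, g T = 2 * ∫ θ in (0:ℝ)..(π/2), h θ := by rw [step1, step2]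
    _ = (2 / |b|) * ∫ θ in (0:ℝ)..(π/2),
        1 / Real.sqrt (1 - (-(a ^ 2 / b ^ 2)) * Real.sin θ ^ 2) := by
      have habs : (0:ℝ) < |b| := abs_pos.2 hb
      simp only [step3]
      rw [intervalIntegral.integral_const_mul]
      field_simp
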